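/- For the cycle graph C_n on n ≥ 3 vertices, the resistance curvature is constant equal to 6/(n²−1): the vector κ with κ_i = 6/(n²−1) for all i satisfies Ω κ = 1. -/

import Mathlib

open Finset SimpleGraph Matrix

/-- The resistance matrix of a graph: `Ω i j = Γ⁻¹ i i + Γ⁻¹ j j - 2 Γ⁻¹ i j`
where `Γ = L + (1/n) J` with `L` the Laplacian and `J` the all-ones matrix. -/
noncomputable def resistanceMatrix {V : Type*} [Fintype V] [DecidableEq V]
    (G : SimpleGraph V) [DecidableRel G.Adj] : Matrix V V ℝ :=
  Matrix.of fun i j =>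
    letI Γinv := (G.lapMatrix ℝ + Matrix.of fun _ _ => (1 : ℝ) / Fintype.card V)⁻¹
    Γinv i i + Γinv j j - 2 * Γinv i j

/-- Auxiliary: `cycF n d = d (n - d)` over the reals. -/
noncomputable def cycF (n : ℕ) (d : ℕ) : ℝ := d * ((n : ℝ) - d)

lemma sum_cast_range (n : ℕ) : ∑ d ∈ Finset.range n, (d : ℝ) = n * ((n : ℝ) - 1) / 2 := by
  induction n with
  | zero => simp
  | succ k ih => rw [Finset.sum_range_succ, ih]; push_cast; ring

lemma sum_sq_range (n : ℕ) :
    ∑ d ∈ Finset.range n, (d : ℝ) ^ 2 = n * ((n : ℝ) - 1) * (2 * n - 1) / 6 := by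
  induction n with
  | zero => simp
  | succ k ih => rw [Finset.sum_range_succ, ih]; push_cast; ring

lemma sum_cycF (n : ℕ) : ∑ d ∈ Finset.range n, cycF n d = n * ((n : ℝ) ^ 2 - 1) / 6 := by
  have h1 := sum_cast_range n
  have h2 := sum_sq_range n
  have : ∑ d ∈ Finset.range n, cycF n d
      = (n : ℝ) * (∑ d ∈ Finset.range n, (d : ℝ)) - ∑ d ∈ Finset.range n, (d : ℝ) ^ 2 := by
    rw [Finset.mul_sum, ← Finset.sum_sub_distrib]
    exact Finset.sum_congr rfl fun d _ => by unfold cycF; ring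
  rw [this, h1, h2]; ring

/-- The explicit inverse of `Γ` for the cycle graph on `m+3` vertices. -/
noncomputable def cycM (m : ℕ) : Matrix (Fin (m + 3)) (Fin (m + 3)) ℝ :=
  Matrix.of fun i j =>
    1 / ((m : ℝ) + 3) + (((m : ℝ) + 3) ^ 2 - 1) / (12 * ((m : ℝ) + 3))
      - cycF (m + 3) ((i - j).val) / (2 * ((m : ℝ) + 3))

lemma cycM_diag (m : ℕ) (i : Fin (m + 3)) :
    cycM m i i = 1 / ((m : ℝ) + 3) + (((m : ℝ) + 3) ^ 2 - 1) / (12 * ((m : ℝ) + 3)) := by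
  simp [cycM, cycF]

lemma sum_cycF_shift_left (m : ℕ) (i : Fin (m + 3)) :
    ∑ j : Fin (m + 3), cycF (m + 3) ((i - j).val)
      = (m + 3 : ℕ) * (((m + 3 : ℕ) : ℝ) ^ 2 - 1) / 6 := by
  rw [Fintype.sum_equiv (Equiv.subLeft i) _ (fun d => cycF (m + 3) d.val) (fun j => by
    simp [Equiv.subLeft])]
  rw [Fin.sum_univ_eq_sum_range (fun d => cycF (m + 3) d) (m + 3), sum_cycF]

lemma sum_cycF_shift_right (m : ℕ) (k : Fin (m + 3)) :
    ∑ j : Fin (m + 3), cycF (m + 3) ((j - k).val)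
      = (m + 3 : ℕ) * (((m + 3 : ℕ) : ℝ) ^ 2 - 1) / 6 := by
  rw [Fintype.sum_equiv (Equiv.subRight k) _ (fun d => cycF (m + 3) d.val) (fun j => by
    simp [Equiv.subRight])]
  rw [Fin.sum_univ_eq_sum_range (fun d => cycF (m + 3) d) (m + 3), sum_cycF]

lemma sum_cycM_row (m : ℕ) (i : Fin (m + 3)) : ∑ j : Fin (m + 3), cycM m i j = 1 := by
  have h := sum_cycF_shift_left m i
  simp only [cycM, Matrix.of_apply]
  rw [Finset.sum_sub_distrib, Finset.sum_const, ← Finset.sum_div, h]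
  have hN : ((m : ℝ) + 3) ≠ 0 := by positivity
  simp only [Finset.card_univ, Fintype.card_fin, nsmul_eq_mul]
  push_cast
  field_simp
  ring

lemma sum_cycM_col (m : ℕ) (k : Fin (m + 3)) : ∑ j : Fin (m + 3), cycM m j k = 1 := by
  have h := sum_cycF_shift_right m k
  simp only [cycM, Matrix.of_apply]
  rw [Finset.sum_sub_distrib, Finset.sum_const, ← Finset.sum_div, h]
  have hN : ((m : ℝ) + 3) ≠ 0 := by positivity
  simp only [Finset.card_univ, Fintype.card_fin, nsmul_eq_mul]
  push_cast
  field_simp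
  ring

lemma cycF_second_diff (m : ℕ) (x : Fin (m + 3)) :
    2 * cycF (m + 3) x.val - cycF (m + 3) (x - 1).val - cycF (m + 3) (x + 1).val
      = if x = 0 then -(2 * ((m : ℝ) + 2)) else 2 := by
  have hx := x.isLt
  have hsub : (x - 1).val = (m + 2 + x.val) % (m + 3) := by
    rw [Fin.sub_def]; simp [Fin.val_one]
  have hadd : (x + 1).val = (x.val + 1) % (m + 3) := by
    rw [Fin.add_def]; simp
  have hx0 : (x = 0) ↔ x.val = 0 := by rw [Fin.ext_iff]; simp
  rcases Nat.eq_zero_or_pos x.val with h0 | h1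
  · rw [if_pos (hx0.mpr h0)]
    rw [hsub, hadd, h0]
    rw [Nat.mod_eq_of_lt (by omega), Nat.mod_eq_of_lt (by omega)]
    unfold cycF; push_cast; ring
  · rw [if_neg (fun h => by simp [hx0.mp h] at h1)]
    obtain ⟨e, he⟩ : ∃ e, x.val = e + 1 := ⟨x.val - 1, by omega⟩
    have hsub' : (x - 1).val = e := by
      rw [hsub, he, show m + 2 + (e + 1) = e + (m + 3) by ring,
        Nat.add_mod_right, Nat.mod_eq_of_lt (by omega)]
    rcases Nat.lt_or_ge (e + 1) (m + 2) with hlt | hge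
    · have hadd' : (x + 1).val = e + 2 := by
        rw [hadd, he, Nat.mod_eq_of_lt (by omega)]
      rw [hsub', hadd', he]
      unfold cycF; push_cast; ring
    · have hev : e = m + 1 := by omega
      have hadd' : (x + 1).val = 0 := by
        rw [hadd, he, hev, show m + 1 + 1 + 1 = m + 3 by ring, Nat.mod_self]
      rw [hsub', hadd', he, hev]
      unfold cycF; push_cast; ring

lemma two_ne_zero_fin (m : ℕ) : (2 : Fin (m + 3)) ≠ 0 := by
  simp [Fin.ext_iff]
  rw [Nat.mod_eq_of_lt (by omega)]; omega

lemma cycGamma_mul_cycM (m : ℕ) :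
    ((cycleGraph (m + 3)).lapMatrix ℝ
        + Matrix.of fun _ _ => (1 : ℝ) / ((m : ℝ) + 3)) * cycM m = 1 := by
  ext i k
  rw [Matrix.add_mul, Matrix.add_apply]
  have hJ : (Matrix.of (fun (_ _ : Fin (m+3)) => (1 : ℝ) / ((m : ℝ) + 3)) * cycM m) i k
      = 1 / ((m : ℝ) + 3) := by
    rw [Matrix.mul_apply]
    simp only [Matrix.of_apply]
    rw [← Finset.mul_sum, sum_cycM_col, mul_one]
  have hL : ((cycleGraph (m + 3)).lapMatrix ℝ * cycM m) i k
      = 2 * cycM m i k - (cycM m (i - 1) k + cycM m (i + 1) k) := by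
    rw [Matrix.mul_apply]
    have : ∑ j, (cycleGraph (m + 3)).lapMatrix ℝ i j * cycM m j k
        = ((cycleGraph (m + 3)).lapMatrix ℝ *ᵥ fun j => cycM m j k) i := rfl
    rw [this, lapMatrix_mulVec_apply, cycleGraph_degree_three_le]
    have hnbr : (cycleGraph (m + 3)).neighborFinset i = {i - 1, i + 1} :=
      cycleGraph_neighborFinset (n := m + 1) (v := i)
    rw [hnbr, Finset.sum_pair]
    · push_cast; ring
    · intro h
      apply two_ne_zero_fin m
      have h2 : i = i + 2 := by
        calc i = i - 1 + 1 := (sub_add_cancel i 1).symm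
        _ = i + 1 + 1 := by rw [h]
        _ = i + 2 := by rw [add_assoc]; rfl
      exact (left_eq_add.mp h2)
  rw [hJ, hL]
  have e1 : i - 1 - k = (i - k) - 1 := sub_right_comm i 1 k
  have e2 : i + 1 - k = (i - k) + 1 := add_sub_right_comm i 1 k
  have key := cycF_second_diff m (i - k)
  have hM : ∀ a b : Fin (m+3), cycM m a b
      = 1 / ((m : ℝ) + 3) + (((m : ℝ) + 3) ^ 2 - 1) / (12 * ((m : ℝ) + 3))
        - cycF (m + 3) ((a - b).val) / (2 * ((m : ℝ) + 3)) := fun a b => rfl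
  rw [hM i k, hM (i-1) k, hM (i+1) k, e1, e2]
  have hik : (i - k = 0) ↔ (i = k) := sub_eq_zero
  have hN : ((m : ℝ) + 3) ≠ 0 := by positivity
  rcases eq_or_ne i k with h | h
  · rw [if_pos (hik.mpr h)] at key
    rw [Matrix.one_apply, if_pos h]
    field_simp
    linear_combination (-12:ℝ) * key
  · rw [if_neg (fun hz => h (hik.mp hz))] at key
    rw [Matrix.one_apply, if_neg h]
    field_simp
    linear_combination (-12:ℝ) * key

lemma cycGammaInv (m : ℕ) :
    ((cycleGraph (m + 3)).lapMatrix ℝ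
        + Matrix.of fun _ _ => (1 : ℝ) / (Fintype.card (Fin (m + 3))))⁻¹ = cycM m := by
  have hc : (Matrix.of fun (_ _ : Fin (m + 3)) => (1 : ℝ) / (Fintype.card (Fin (m + 3))))
      = Matrix.of fun _ _ => (1 : ℝ) / ((m : ℝ) + 3) := by
    ext a b
    simp only [Matrix.of_apply, Fintype.card_fin]
    push_cast
    ring
  rw [hc]
  exact Matrix.inv_eq_right_inv (cycGamma_mul_cycM m)

/-- The cycle graph `C n` (`n ≥ 3`) has constant resistance curvature `6/(n²-1)`:
the constant vector `6/(n²-1)` solves `Ω κ = 1`. -/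
theorem cycleGraph_constant_curvature (n : ℕ) (hn : 3 ≤ n) :
    resistanceMatrix (SimpleGraph.cycleGraph n) *ᵥ
        (fun _ => (6 : ℝ) / ((n : ℝ) ^ 2 - 1)) = fun _ => 1 := by
  obtain ⟨m, rfl⟩ : ∃ m, n = m + 3 := ⟨n - 3, by omega⟩
  funext i
  simp only [resistanceMatrix, Matrix.mulVec, dotProduct, Matrix.of_apply]
  rw [show ((cycleGraph (m + 3)).lapMatrix ℝ
      + Matrix.of fun _ _ => (1 : ℝ) / (Fintype.card (Fin (m + 3))))⁻¹ = cycM m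
    from cycGammaInv m]
  have hsum : ∑ j : Fin (m + 3), (cycM m i i + cycM m j j - 2 * cycM m i j)
      = (((m : ℝ) + 3) ^ 2 - 1) / 6 := by
    rw [Finset.sum_sub_distrib, Finset.sum_add_distrib, ← Finset.mul_sum, sum_cycM_row]
    simp only [cycM_diag, Finset.sum_const, Finset.card_univ, Fintype.card_fin, nsmul_eq_mul]
    have hN : ((m : ℝ) + 3) ≠ 0 := by positivity
    push_cast
    field_simp
    ring
  rw [← Finset.sum_mul, hsum]
  have h1 : (((m : ℝ) + 3) ^ 2 - 1) ≠ 0 := by nlinarith [Nat.cast_nonneg (α := ℝ) m]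
  push_cast
  field_simp
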